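/- For every c with −1 < c < 1, the 4×4 matrix X(c) with rows (1, −√(1−c²), 0, c), (−√(1−c²), 1, −c, 0), (0, −c, 1, −√(1−c²)), (c, 0, −√(1−c²), 1) lies in L_4 and satisfies X(c)² = 2·X(c); hence X(c) is a fixed point of linear optimization in L_4, giving an infinite family of distinct fixed points. -/

import Mathlib

def elliptope (n : ℕ) : Set (Matrix (Fin n) (Fin n) ℝ) :=
  {X | X.PosSemidef ∧ ∀ i, X i i = 1}

def frob {n : ℕ} (A B : Matrix (Fin n) (Fin n) ℝ) : ℝ :=
  ∑ i, ∑ j, A i j * B i j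

noncomputable def Xc (c : ℝ) : Matrix (Fin 4) (Fin 4) ℝ :=
  !![1, -Real.sqrt (1 - c ^ 2), 0, c;
     -Real.sqrt (1 - c ^ 2), 1, -c, 0;
     0, -c, 1, -Real.sqrt (1 - c ^ 2);
     c, 0, -Real.sqrt (1 - c ^ 2), 1]

lemma psd_trace_nonneg {n : ℕ} {A : Matrix (Fin n) (Fin n) ℝ}
    (hA : A.PosSemidef) : 0 ≤ A.trace := by
  rw [Matrix.trace]
  apply Finset.sum_nonneg
  intro i _
  exact hA.diag_nonneg

open scoped MatrixOrder in
lemma psd_trace_mul_nonneg {n : ℕ} {A B : Matrix (Fin n) (Fin n) ℝ}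
    (hA : A.PosSemidef) (hB : B.PosSemidef) : 0 ≤ (A * B).trace := by
  obtain ⟨S, rfl⟩ := CStarAlgebra.nonneg_iff_eq_star_mul_self.mp hA.nonneg
  rw [Matrix.mul_assoc, Matrix.trace_mul_comm]
  have hconj : (S * B * star S).PosSemidef := hB.mul_mul_conjTranspose_same S
  simpa [Matrix.mul_assoc] using psd_trace_nonneg hconj

lemma psd_smul {n : ℕ} {A : Matrix (Fin n) (Fin n) ℝ}
    (hA : A.PosSemidef) {r : ℝ} (hr : 0 ≤ r) : (r • A).PosSemidef := by
  constructor
  · unfold Matrix.IsHermitian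
    rw [Matrix.conjTranspose_smul, hA.1]
    simp
  · intro x
    exact (hA.smul hr).2 x

lemma symm_sq_psd {n : ℕ} {A : Matrix (Fin n) (Fin n) ℝ}
    (hA : A.IsHermitian) : (A * A).PosSemidef := by
  have := Matrix.posSemidef_conjTranspose_mul_self A
  rwa [hA] at this

set_option maxHeartbeats 1000000 in
theorem stmt16 (c : ℝ) (hc1 : -1 < c) (hc2 : c < 1) :
    Xc c ∈ elliptope 4 ∧ Xc c * Xc c = (2 : ℝ) • Xc c ∧
      (∀ Y ∈ elliptope 4, frob (Xc c) Y ≤ frob (Xc c) (Xc c)) ∧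
      (∀ c' : ℝ, -1 < c' → c' < 1 → Xc c' = Xc c → c' = c) := by
  have hs : Real.sqrt (1 - c ^ 2) ^ 2 = 1 - c ^ 2 :=
    Real.sq_sqrt (by nlinarith)
  have hherm : (Xc c).IsHermitian := by
    ext i j
    fin_cases i <;> fin_cases j <;> simp [Xc, Matrix.conjTranspose_apply]
  have hsq : Xc c * Xc c = (2 : ℝ) • Xc c := by
    ext i j
    fin_cases i <;> fin_cases j <;>
      simp [Xc, Matrix.mul_apply, Fin.sum_univ_four] <;> nlinarith [hs]
  have hpsd : (Xc c).PosSemidef := by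
    have h2 : Xc c = (2⁻¹ : ℝ) • (Xc c * Xc c) := by rw [hsq]; ext i j; simp
    rw [h2]
    exact psd_smul (symm_sq_psd hherm) (by norm_num)
  have hdiag : ∀ i, Xc c i i = 1 := by
    intro i; fin_cases i <;> simp [Xc]
  refine ⟨⟨hpsd, hdiag⟩, hsq, ?_, ?_⟩
  · intro Y hY
    -- 2•1 - Xc c is PSD since (2•1 - X)^2 = 2•(2•1 - X)
    set Z : Matrix (Fin 4) (Fin 4) ℝ :=
      !![1, Real.sqrt (1 - c ^ 2), 0, -c;
         Real.sqrt (1 - c ^ 2), 1, c, 0;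
         0, c, 1, Real.sqrt (1 - c ^ 2);
         -c, 0, Real.sqrt (1 - c ^ 2), 1] with hZ
    have hZherm : Z.IsHermitian := by
      ext i j; fin_cases i <;> fin_cases j <;>
        simp [Z, Matrix.conjTranspose_apply]
    have hZsq : Z * Z = (2 : ℝ) • Z := by
      ext i j
      fin_cases i <;> fin_cases j <;>
        simp [Z, Matrix.mul_apply, Fin.sum_univ_four] <;>
        nlinarith [hs]
    have hZpsd : Z.PosSemidef := by
      have h2 : Z = (2⁻¹ : ℝ) • (Z * Z) := by rw [hZsq]; ext i j; simp
      rw [h2]; exact psd_smul (symm_sq_psd hZherm) (by norm_num)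
    have htr : 0 ≤ (Z * Y).trace := psd_trace_mul_nonneg hZpsd hY.1
    have hfrobY : frob (Xc c) Y = (Xc c * Y).trace := by
      simp only [frob, Matrix.trace, Matrix.diag_apply, Matrix.mul_apply]
      refine Finset.sum_congr rfl fun i _ => Finset.sum_congr rfl fun j _ => ?_
      have h1 : Y j i = Y i j := by
        have := congrFun (congrFun hY.1.1 i) j; simpa using this
      rw [h1]
    have hfrobX : frob (Xc c) (Xc c) = (Xc c * Xc c).trace := by
      simp only [frob, Matrix.trace, Matrix.diag_apply, Matrix.mul_apply]
      refine Finset.sum_congr rfl fun i _ => Finset.sum_congr rfl fun j _ => ?_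
      have h1 : Xc c j i = Xc c i j := by
        have := congrFun (congrFun hherm.eq i) j; simpa using this
      rw [h1]
    rw [hfrobY, hfrobX, hsq]
    have hZ2 : Z = (2 : ℝ) • 1 - Xc c := by
      ext i j; fin_cases i <;> fin_cases j <;>
        simp [Z, Xc, Matrix.one_apply] <;> norm_num
    have hZtr : (Z * Y).trace = 2 * Y.trace - (Xc c * Y).trace := by
      rw [hZ2]
      simp [Matrix.sub_mul, Matrix.smul_mul, Matrix.trace_smul]
    have hYtr : Y.trace = 4 := by
      simp [Matrix.trace, Fin.sum_univ_four, hY.2]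
    rw [hZtr, hYtr] at htr
    have hXtr : (Xc c).trace = 4 := by
      simp [Matrix.trace, Fin.sum_univ_four, hdiag]
    rw [Matrix.trace_smul, hXtr]
    simp only [smul_eq_mul]
    linarith
  · intro c' _ _ h
    have := congrFun (congrFun h 3) 0
    simp [Xc] at this
    exact this
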